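/- For all integers n ≥ 1, (n+2)·∑_{l=0}^{n} B_l(x) B_{n-l}(x) = 2·∑_{l=0}^{n} C(n+2, l+2) B_l B_{n-l}(x) + C(n+2,3) B_{n-1}(x), as an identity of polynomials in x. -/
import Mathlib

section MatiyasevichAux
open Finset
open scoped Polynomial
open Polynomial (C derivative)

local notation "PB" => Polynomial.bernoulli
local notation "B" => _root_.bernoulli

section NatLemmas

lemma hs1 (N k : ℕ) : ∑ l ∈ Finset.range N, l.choose k = N.choose (k + 1) := by
  induction N with
  | zero => simp
  | succ N ih => rw [Finset.sum_range_succ, ih, Nat.choose_succ_succ']; omega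

lemma hs2 (m k : ℕ) : ∑ l ∈ Finset.range (m + 1), (m + 1 - l) * l.choose k
    = (m + 2).choose (k + 2) := by
  induction m with
  | zero =>
    cases k with
    | zero => simp
    | succ k => simp [Nat.choose_eq_zero_of_lt (show 2 < k + 1 + 2 by omega)]
  | succ m ih =>
    have h : ∀ l ∈ Finset.range (m + 2), (m + 2 - l) * l.choose k
        = (m + 1 - l) * l.choose k + l.choose k := by
      intro l hl
      rw [Finset.mem_range] at hl
      have : m + 2 - l = (m + 1 - l) + 1 := by omega
      rw [this, add_mul, one_mul]
    rw [Finset.sum_congr rfl h, Finset.sum_add_distrib, Finset.sum_range_succ, Nat.sub_self,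
      zero_mul, add_zero, ih, hs1, Nat.choose_succ_succ' (m+2) (k+1)]
    exact Nat.add_comm _ _

lemma sum_id (N : ℕ) : ∑ l ∈ Finset.range N, l = N.choose 2 := by
  induction N with
  | zero => simp
  | succ N ih =>
    rw [Finset.sum_range_succ, ih, Nat.choose_succ_succ' N 1, Nat.choose_one_right]
    exact Nat.add_comm _ _

lemma sum_lnl (n : ℕ) : ∑ l ∈ Finset.range (n + 1), l * (n - l) = (n + 1).choose 3 := by
  induction n with
  | zero => decide
  | succ n ih =>
    rw [Finset.sum_range_succ, Nat.sub_self, mul_zero, add_zero]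
    have h : ∀ l ∈ Finset.range (n + 1), l * (n + 1 - l) = l * (n - l) + l := by
      intro l hl; rw [Finset.mem_range] at hl
      have : n + 1 - l = (n - l) + 1 := by omega
      rw [this, mul_add, mul_one]
    rw [Finset.sum_congr rfl h, Finset.sum_add_distrib, ih, sum_id,
      Nat.choose_succ_succ' (n+1) 2]
    exact Nat.add_comm _ _

lemma choose_id' (M r : ℕ) :
    (M + 1 - r) * (M + 1).choose r = (M + 1) * M.choose r := by
  rw [mul_comm, ← Nat.choose_succ_right_eq, ← Nat.add_one_mul_choose_eq]

end NatLemmas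

lemma bern_eval (l : ℕ) (x : ℚ) : (PB l).eval x
    = ∑ k ∈ Finset.range (l + 1), B k * (l.choose k) * x ^ (l - k) := by
  simp [Polynomial.bernoulli, Polynomial.eval_finset_sum]

lemma auxA (m : ℕ) (x : ℚ) :
    ∑ l ∈ Finset.range (m + 1), ((m + 1 - l : ℕ) : ℚ) * x ^ (m - l) * (PB l).eval x
    = ∑ l ∈ Finset.range (m + 1), ((m + 2).choose (l + 2) : ℚ) * B l * x ^ (m - l) := by
  have step1 : ∀ l ∈ Finset.range (m + 1),
      ((m + 1 - l : ℕ) : ℚ) * x ^ (m - l) * (PB l).eval x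
      = ∑ k ∈ Finset.range (m + 1),
          B k * (((m + 1 - l) * l.choose k : ℕ) : ℚ) * x ^ (m - k) := by
    intro l hl
    rw [Finset.mem_range] at hl
    rw [bern_eval, Finset.mul_sum]
    rw [← Finset.sum_subset (Finset.range_subset_range.2 (by omega : l + 1 ≤ m + 1))
      (fun k _ hk => by
        rw [Finset.mem_range, not_lt] at hk
        rw [Nat.choose_eq_zero_of_lt (by omega)]
        push_cast; ring)]
    refine Finset.sum_congr rfl fun k hk => ?_
    rw [Finset.mem_range] at hk
    have hpow : x ^ (m - l) * x ^ (l - k) = x ^ (m - k) := by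
      rw [← pow_add]; congr 1; omega
    rw [Nat.cast_mul, ← hpow]
    ring
  rw [Finset.sum_congr rfl step1, Finset.sum_comm]
  refine Finset.sum_congr rfl fun k _ => ?_
  rw [← Finset.sum_mul, ← Finset.mul_sum]
  rw [show ∑ l ∈ Finset.range (m+1), (((m + 1 - l) * l.choose k : ℕ) : ℚ)
      = (((m+2).choose (k+2) : ℕ) : ℚ) by rw [← Nat.cast_sum, hs2]]
  ring

noncomputable def Pm (n : ℕ) : ℚ[X] :=
  C ((n : ℚ) + 2) * (∑ l ∈ Finset.range (n + 1), PB l * PB (n - l))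
  - (C 2 * ∑ l ∈ Finset.range (n + 1),
      C (((n + 2).choose (l + 2) : ℚ) * B l) * PB (n - l)
     + C (((n + 2).choose 3 : ℚ)) * PB (n - 1))

lemma Pm_eval (n : ℕ) (x : ℚ) : (Pm n).eval x =
    ((n : ℚ) + 2) * (∑ l ∈ Finset.range (n + 1),
        (PB l).eval x * (PB (n - l)).eval x)
    - (2 * (∑ l ∈ Finset.range (n + 1),
        ((n + 2).choose (l + 2) : ℚ) * B l * (PB (n - l)).eval x)
       + ((n + 2).choose 3 : ℚ) * (PB (n - 1)).eval x) := by
  simp only [Pm, Polynomial.eval_sub, Polynomial.eval_add, Polynomial.eval_mul,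
    Polynomial.eval_C, Polynomial.eval_finset_sum]

lemma shift (n : ℕ) (hn : 1 ≤ n) (x : ℚ) : (Pm n).eval (1 + x) = (Pm n).eval x := by
  rw [Pm_eval, Pm_eval]
  have E : ∀ k : ℕ, (PB k).eval (1 + x) = (PB k).eval x + k * x ^ (k - 1) :=
    fun k => Polynomial.bernoulli_eval_one_add k x
  simp only [E]
  have expand : ∑ l ∈ Finset.range (n+1),
        ((PB l).eval x + l * x^(l-1)) * ((PB (n-l)).eval x + (n-l : ℕ) * x^(n-l-1))
      = (∑ l ∈ Finset.range (n+1), (PB l).eval x * (PB (n-l)).eval x)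
        + ((∑ l ∈ Finset.range (n+1), ((l:ℕ):ℚ) * x^(l-1) * (PB (n-l)).eval x)
        + ((∑ l ∈ Finset.range (n+1), ((n-l:ℕ):ℚ) * x^(n-l-1) * (PB l).eval x)
        + ∑ l ∈ Finset.range (n+1), ((l:ℕ):ℚ) * ((n-l:ℕ):ℚ) * (x^(l-1) * x^(n-l-1)))) := by
    rw [← Finset.sum_add_distrib, ← Finset.sum_add_distrib, ← Finset.sum_add_distrib]
    exact Finset.sum_congr rfl fun l _ => by ring
  have texpand : ∑ l ∈ Finset.range (n+1),
        ((n+2).choose (l+2) : ℚ) * B l * ((PB (n-l)).eval x + (n-l:ℕ) * x^(n-l-1))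
      = (∑ l ∈ Finset.range (n+1), ((n+2).choose (l+2) : ℚ) * B l * (PB (n-l)).eval x)
        + ∑ l ∈ Finset.range (n+1),
            ((n+2).choose (l+2) : ℚ) * B l * (((n-l:ℕ):ℚ) * x^(n-l-1)) := by
    rw [← Finset.sum_add_distrib]; exact Finset.sum_congr rfl fun l _ => by ring
  have hrefl : ∑ l ∈ Finset.range (n+1), ((l:ℕ):ℚ) * x^(l-1) * (PB (n-l)).eval x
      = ∑ l ∈ Finset.range (n+1), ((n-l:ℕ):ℚ) * x^(n-l-1) * (PB l).eval x := by
    rw [← Finset.sum_range_reflect (fun l => ((n-l:ℕ):ℚ) * x^(n-l-1) * (PB l).eval x) (n+1)]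
    refine Finset.sum_congr rfl fun j hj => ?_
    rw [Finset.mem_range] at hj
    simp only [Nat.add_sub_cancel]
    have h1 : n - (n - j) = j := by omega
    rw [h1]
  have hS3 : ∑ l ∈ Finset.range (n+1), ((l:ℕ):ℚ) * ((n-l:ℕ):ℚ) * (x^(l-1) * x^(n-l-1))
      = (((n+1).choose 3 : ℕ) : ℚ) * x^(n-2) := by
    have step : ∀ l ∈ Finset.range (n+1),
        ((l:ℕ):ℚ) * ((n-l:ℕ):ℚ) * (x^(l-1) * x^(n-l-1)) = ((l * (n-l) : ℕ):ℚ) * x^(n-2) := by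
      intro l hl; rw [Finset.mem_range] at hl
      rcases Nat.eq_zero_or_pos l with rfl | hl1
      · simp
      rcases eq_or_lt_of_le (Nat.lt_succ_iff.1 hl) with rfl | hl2
      · simp
      · have hpow : x^(l-1) * x^(n-l-1) = x^(n-2) := by rw [← pow_add]; congr 1; omega
        rw [hpow, Nat.cast_mul, mul_assoc]
    rw [Finset.sum_congr rfl step, ← Finset.sum_mul, ← Nat.cast_sum, sum_lnl]
  have hS2 : ((n:ℚ)+2) * ∑ l ∈ Finset.range (n+1), ((n-l:ℕ):ℚ) * x^(n-l-1) * (PB l).eval x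
      = ∑ l ∈ Finset.range (n+1),
          ((n+2).choose (l+2) : ℚ) * B l * (((n-l:ℕ):ℚ) * x^(n-l-1)) := by
    obtain ⟨m, rfl⟩ : ∃ m, n = m + 1 := ⟨n - 1, by omega⟩
    rw [Finset.sum_range_succ (fun l => ((m+1-l:ℕ):ℚ) * x^(m+1-l-1) * (PB l).eval x) (m+1),
      Finset.sum_range_succ
        (fun l => ((m+1+2).choose (l+2) : ℚ) * B l * (((m+1-l:ℕ):ℚ) * x^(m+1-l-1))) (m+1)]
    simp only [Nat.sub_self, Nat.cast_zero, zero_mul, mul_zero, add_zero]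
    have fix1 : ∀ l ∈ Finset.range (m+1), ((m+1-l:ℕ):ℚ) * x^(m+1-l-1) * (PB l).eval x
        = ((m+1-l:ℕ):ℚ) * x^(m-l) * (PB l).eval x := by
      intro l hl; rw [Finset.mem_range] at hl
      have h1 : m+1-l-1 = m-l := by omega
      rw [h1]
    have fix2 : ∀ l ∈ Finset.range (m+1),
        ((m+1+2).choose (l+2) : ℚ) * B l * (((m+1-l:ℕ):ℚ) * x^(m+1-l-1))
        = (((m:ℕ):ℚ) + 3) * (((m+2).choose (l+2):ℕ):ℚ) * B l * x^(m-l) := by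
      intro l hl; rw [Finset.mem_range] at hl
      have hb : m+1-l-1 = m-l := by omega
      rw [hb]
      have key : ((m+1-l:ℕ):ℚ) * (((m+1+2).choose (l+2):ℕ):ℚ)
          = (((m:ℕ):ℚ) + 3) * (((m+2).choose (l+2):ℕ):ℚ) := by
        have h := choose_id' (m+2) (l+2)
        have h1 : m + 2 + 1 - (l + 2) = m + 1 - l := by omega
        rw [h1] at h
        have h2 := congrArg (Nat.cast : ℕ → ℚ) h
        push_cast at h2 ⊢
        linear_combination h2
      linear_combination (B l * x^(m-l)) * key
    rw [Finset.sum_congr rfl fix1, Finset.sum_congr rfl fix2, auxA, Finset.mul_sum]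
    refine Finset.sum_congr rfl fun l _ => ?_
    push_cast
    ring
  have hK : ((n:ℚ)+2) * (((n+1).choose 3 : ℕ):ℚ)
      = (((n+2).choose 3:ℕ):ℚ) * ((n-1:ℕ):ℚ) := by
    have h := choose_id' (n+1) 3
    rw [show n+1+1 = n+2 from rfl] at h
    have h1 : n + 2 - 3 = n - 1 := by omega
    rw [h1] at h
    have h2 := congrArg (Nat.cast : ℕ → ℚ) h
    push_cast [Nat.cast_sub hn] at h2 ⊢
    linear_combination -h2
  have hexp : n - 1 - 1 = n - 2 := by omega
  rw [expand, texpand, hrefl, hS3, hexp]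
  linear_combination 2 * hS2 + x^(n-2) * hK
lemma Pm_deriv (n : ℕ) : derivative (Pm (n + 1)) = C ((n : ℚ) + 3) * Pm n := by
  have hL : derivative (∑ l ∈ Finset.range (n + 2), PB l * PB (n + 1 - l))
      = C ((n : ℚ) + 2) * ∑ l ∈ Finset.range (n + 1), PB l * PB (n - l) := by
    rw [Polynomial.derivative_sum]
    have e1 : ∀ l ∈ Finset.range (n + 2),
        derivative (PB l * PB (n + 1 - l))
        = (l : ℚ[X]) * (PB (l - 1) * PB (n + 1 - l))
          + ((n + 1 - l : ℕ) : ℚ[X]) * (PB l * PB (n + 1 - l - 1)) := by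
      intro l _
      rw [Polynomial.derivative_mul, Polynomial.derivative_bernoulli,
        Polynomial.derivative_bernoulli]
      ring
    rw [Finset.sum_congr rfl e1, Finset.sum_add_distrib]
    have h1 : ∑ l ∈ Finset.range (n + 2), (l : ℚ[X]) * (PB (l - 1) * PB (n + 1 - l))
        = ∑ j ∈ Finset.range (n + 1), ((j : ℚ[X]) + 1) * (PB j * PB (n - j)) := by
      rw [Finset.sum_range_succ']
      simp only [Nat.cast_zero, zero_mul, add_zero, Nat.add_sub_cancel,
        Nat.add_sub_add_right]
      push_cast
      rfl
    have h2 : ∑ l ∈ Finset.range (n + 2),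
          ((n + 1 - l : ℕ) : ℚ[X]) * (PB l * PB (n + 1 - l - 1))
        = ∑ l ∈ Finset.range (n + 1), (((n - l : ℕ) : ℚ[X]) + 1) * (PB l * PB (n - l)) := by
      rw [Finset.sum_range_succ]
      simp only [Nat.sub_self, Nat.cast_zero, zero_mul, add_zero]
      refine Finset.sum_congr rfl fun l hl => ?_
      rw [Finset.mem_range] at hl
      have hb : n + 1 - l - 1 = n - l := by omega
      have ha : n + 1 - l = (n - l) + 1 := by omega
      rw [hb, ha]
      push_cast
      ring
    rw [h1, h2, ← Finset.sum_add_distrib, Finset.mul_sum]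
    refine Finset.sum_congr rfl fun l hl => ?_
    rw [Finset.mem_range] at hl
    have hc : ((n - l : ℕ) : ℚ[X]) = (n : ℚ[X]) - l := by
      push_cast [Nat.cast_sub (by omega : l ≤ n)]; ring
    rw [hc]
    simp only [map_add, Polynomial.C_eq_natCast, map_ofNat]
    ring
  have choose_id : ∀ M r : ℕ, (M + 1 - r) * (M + 1).choose r = (M + 1) * M.choose r := by
    intro M r
    rw [mul_comm, ← Nat.choose_succ_right_eq, ← Nat.add_one_mul_choose_eq]
  have hR : derivative (∑ l ∈ Finset.range (n + 2),
        C (((n + 1 + 2).choose (l + 2) : ℚ) * B l) * PB (n + 1 - l))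
      = C ((n : ℚ) + 3) * ∑ l ∈ Finset.range (n + 1),
        C (((n + 2).choose (l + 2) : ℚ) * B l) * PB (n - l) := by
    rw [Polynomial.derivative_sum]
    have e1 : ∀ l ∈ Finset.range (n + 2),
        derivative (C (((n + 1 + 2).choose (l + 2) : ℚ) * B l) * PB (n + 1 - l))
        = C (((n + 1 + 2).choose (l + 2) : ℚ) * B l)
            * (((n + 1 - l : ℕ) : ℚ[X]) * PB (n + 1 - l - 1)) := by
      intro l _
      rw [Polynomial.derivative_C_mul, Polynomial.derivative_bernoulli]
    rw [Finset.sum_congr rfl e1, Finset.sum_range_succ]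
    simp only [Nat.sub_self, Nat.cast_zero, zero_mul, mul_zero, add_zero]
    rw [Finset.mul_sum]
    refine Finset.sum_congr rfl fun l hl => ?_
    rw [Finset.mem_range] at hl
    have hb : n + 1 - l - 1 = n - l := by omega
    rw [hb]
    have key : ((n + 1 - l : ℕ) : ℚ) * (((n + 1 + 2).choose (l + 2) : ℕ) : ℚ)
        = ((n : ℚ) + 3) * (((n + 2).choose (l + 2) : ℕ) : ℚ) := by
      have h := choose_id (n + 2) (l + 2)
      have h1 : n + 2 + 1 - (l + 2) = n + 1 - l := by omega
      rw [h1] at h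
      have h2 := congrArg (Nat.cast : ℕ → ℚ) h
      push_cast [Nat.cast_sub (show l ≤ n + 1 by omega)] at h2 ⊢
      linear_combination h2
    rw [← Polynomial.C_eq_natCast, ← mul_assoc, ← mul_assoc, ← map_mul, ← map_mul]
    congr 2
    linear_combination (B l) * key
  have hlast : derivative (C (((n + 1 + 2).choose 3 : ℚ)) * PB (n + 1 - 1))
      = C ((n : ℚ) + 3) * (C (((n + 2).choose 3 : ℚ)) * PB (n - 1)) := by
    rw [Polynomial.derivative_C_mul, Polynomial.derivative_bernoulli]
    have hb : n + 1 - 1 = n := by omega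
    rw [hb]
    have key : ((n : ℕ) : ℚ) * (((n + 1 + 2).choose 3 : ℕ) : ℚ)
        = ((n : ℚ) + 3) * (((n + 2).choose 3 : ℕ) : ℚ) := by
      have h := choose_id (n + 2) 3
      have h1 : n + 2 + 1 - 3 = n := by omega
      rw [h1] at h
      have h2 := congrArg (Nat.cast : ℕ → ℚ) h
      push_cast at h2 ⊢
      linear_combination h2
    rw [← Polynomial.C_eq_natCast, ← mul_assoc, ← mul_assoc, ← map_mul, ← map_mul]
    congr 2
    linear_combination key
  show derivative (C (((n + 1 : ℕ) : ℚ) + 2) * (∑ l ∈ Finset.range (n + 2), PB l * PB (n + 1 - l))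
      - (C 2 * ∑ l ∈ Finset.range (n + 2),
          C (((n + 1 + 2).choose (l + 2) : ℚ) * B l) * PB (n + 1 - l)
         + C (((n + 1 + 2).choose 3 : ℚ)) * PB (n + 1 - 1))) = _
  rw [Polynomial.derivative_sub, Polynomial.derivative_add, Polynomial.derivative_C_mul,
    Polynomial.derivative_C_mul, hL, hR, hlast]
  have hc : (((n + 1 : ℕ) : ℚ) + 2) = ((n : ℚ) + 3) := by push_cast; ring
  rw [hc, Pm]
  ring

lemma deriv_eq_zero_of_shift (p : ℚ[X]) (h : ∀ x : ℚ, p.eval (1 + x) = p.eval x) :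
    derivative p = 0 := by
  have h2 : ∀ k : ℕ, p.eval (k : ℚ) = p.eval 0 := by
    intro k
    induction k with
    | zero => norm_num
    | succ k ih => push_cast; rw [add_comm, h]; exact ih
  have hp : p - C (p.eval 0) = 0 := by
    apply Polynomial.eq_zero_of_infinite_isRoot
    refine Set.infinite_of_injective_forall_mem (f := fun k : ℕ => (k : ℚ))
      (fun a b hab => Nat.cast_injective hab) ?_
    · intro k
      simp only [Set.mem_setOf_eq, Polynomial.IsRoot, Polynomial.eval_sub, Polynomial.eval_C,
        h2 k, sub_self]
  have hp2 : p = C (p.eval 0) := by linear_combination hp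
  rw [hp2, Polynomial.derivative_C]

lemma Pm_zero (n : ℕ) (hn : 1 ≤ n) : Pm n = 0 := by
  have h0 : derivative (Pm (n + 1)) = 0 :=
    deriv_eq_zero_of_shift _ (shift (n + 1) (by omega))
  have h1 : C ((n : ℚ) + 3) * Pm n = 0 := by rw [← Pm_deriv, h0]
  rcases mul_eq_zero.1 h1 with h | h
  · exfalso
    rw [Polynomial.C_eq_zero] at h
    have hpos : (0:ℚ) < (n:ℚ) + 3 := by positivity
    linarith
  · exact h


end MatiyasevichAux

open Polynomial

theorem bernoulli_poly_matiyasevich (n : ℕ) (hn : 1 ≤ n) (x : ℚ) :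
    ((n : ℚ) + 2) * ∑ l ∈ Finset.range (n + 1),
        (Polynomial.bernoulli l).eval x * (Polynomial.bernoulli (n - l)).eval x
      = 2 * (∑ l ∈ Finset.range (n + 1),
          ((n + 2).choose (l + 2) : ℚ) * _root_.bernoulli l * (Polynomial.bernoulli (n - l)).eval x)
        + ((n + 2).choose 3 : ℚ) * (Polynomial.bernoulli (n - 1)).eval x := by
  have h := Pm_eval n x
  rw [Pm_zero n hn] at h
  simp only [Polynomial.eval_zero] at h
  linarith [h]
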